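/- Let e ≥ 2, let w ∈ {3,4}, let μ be a partition of e-weight w, let j be a residue class modulo e, and let k be an integer with 0 < k < w. If φ_j(μ) − ε_j(μ) = k then ε_j(μ) ≤ 1 (so φ_j(μ) is either k or k+1); likewise, if ε_j(μ) − φ_j(μ) = k then φ_j(μ) ≤ 1 (so ε_j(μ) is either k or k+1). -/

import Mathlib

/-- A partition: a weakly decreasing function `parts : ℕ → ℕ` (0-indexed),
having exactly `len` nonzero parts. -/
structure AbacusPartition where
  parts : ℕ → ℕ
  antitone : Antitone parts
  len : ℕ
  pos_of_lt : ∀ i, i < len → 0 < parts i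
  zero_of_ge : ∀ i, len ≤ i → parts i = 0

/-- The beta-set (abacus display) of a partition with `r` beads:
positions `λ_i + r - i` for `1 ≤ i ≤ r` (0-indexed: `parts i + (r - 1 - i)`). -/
def AbacusPartition.betaSet (lam : AbacusPartition) (r : ℕ) : Finset ℕ :=
  (Finset.range r).image (fun i => lam.parts i + (r - 1 - i))

/-- e-weight of the bead at position `p` of the display `B`: the number of
unoccupied positions `q < p` with `q ≡ p (mod e)`. -/
def beadWeight (e : ℕ) (B : Finset ℕ) (p : ℕ) : ℕ :=
  ((Finset.range p).filter (fun q => q % e = p % e ∧ q ∉ B)).card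

/-- Total e-weight of the display `B`. -/
def abacusWeight (e : ℕ) (B : Finset ℕ) : ℕ :=
  B.sum (fun p => beadWeight e B p)

/-- e-weight of a partition (computed from the display with `lam.len` beads). -/
def eWeight (e : ℕ) (lam : AbacusPartition) : ℕ :=
  abacusWeight e (lam.betaSet lam.len)

/-- Positions on runner `res` (positions `p` with `p % e = res`), in increasing
order, up to a bound strictly beyond every bead. -/
def posList (e : ℕ) (B : Finset ℕ) (res : ℕ) : List ℕ :=
  (List.range (B.sup id + e + 2)).filter (fun p => p % e == res)

/-- One step of the signature-reduction automaton; the state is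
`(list of surviving '+' positions, stack of pending '−' positions)`.
A '−' occurs at `p` when `p` is occupied and its preceding position unoccupied
(position `-1` counts as occupied); a '+' occurs at `p` when `p` is unoccupied
and its preceding position occupied.  A '+' cancels the most recent pending '−'. -/
def signStep (B : Finset ℕ) (st : List ℕ × List ℕ) (p : ℕ) : List ℕ × List ℕ :=
  if p ∈ B ∧ ¬(p = 0 ∨ p - 1 ∈ B) then (st.1, p :: st.2)
  else if p ∉ B ∧ (p = 0 ∨ p - 1 ∈ B) then
    (match st.2 with
     | [] => (p :: st.1, ([] : List ℕ))
     | _ :: tl => (st.1, tl))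
  else st

/-- Final state of the reduction of the `j`-signature on runner `res`:
`(surviving '+' (conormal) positions, surviving '−' (normal) positions)`,
each list in decreasing order of position. -/
def signState (e : ℕ) (B : Finset ℕ) (res : ℕ) : List ℕ × List ℕ :=
  (posList e B res).foldl (signStep B) ([], [])

/-- Positions of the normal beads on runner `res`, in decreasing order. -/
def normalList (e : ℕ) (B : Finset ℕ) (res : ℕ) : List ℕ := (signState e B res).2

/-- The conormal positions on runner `res`, in decreasing order. -/
def conormalList (e : ℕ) (B : Finset ℕ) (res : ℕ) : List ℕ := (signState e B res).1

/-- ε: the number of normal beads on runner `res`. -/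
def epsB (e : ℕ) (B : Finset ℕ) (res : ℕ) : ℕ := (normalList e B res).length

/-- φ: the number of conormal positions on runner `res`. -/
def phiB (e : ℕ) (B : Finset ℕ) (res : ℕ) : ℕ := (conormalList e B res).length

/-- ε_j of a partition: in the display with `lam.len` beads, residue `j`
is carried by runner `(j + lam.len) % e`. -/
def epsP (e : ℕ) (lam : AbacusPartition) (j : ℕ) : ℕ :=
  epsB e (lam.betaSet lam.len) ((j + lam.len) % e)

/-- φ_j of a partition. -/
def phiP (e : ℕ) (lam : AbacusPartition) (j : ℕ) : ℕ :=
  phiB e (lam.betaSet lam.len) ((j + lam.len) % e)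

/-- Move each bead in `ps` from its position `p` to `p - 1`. -/
def moveDown (B : Finset ℕ) (ps : List ℕ) : Finset ℕ :=
  ps.foldl (fun C p => insert (p - 1) (C.erase p)) B

/-- For each position `p` in `ps`, move the bead at `p - 1` to `p`. -/
def moveUp (B : Finset ℕ) (ps : List ℕ) : Finset ℕ :=
  ps.foldl (fun C p => insert p (C.erase (p - 1))) B

/-- Ẽ^t on displays: move the `t` normal beads at the smallest positions down. -/
def Etil (e : ℕ) (B : Finset ℕ) (res t : ℕ) : Finset ℕ :=
  moveDown B ((normalList e B res).reverse.take t)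

/-- F̃^t on displays: for the `t` largest conormal positions `p`,
move the bead at `p - 1` to `p`. -/
def Ftil (e : ℕ) (B : Finset ℕ) (res t : ℕ) : Finset ℕ :=
  moveUp B ((conormalList e B res).take t)

/-- Number of beads of `B` on runner `i`. -/
def runnerCount (e : ℕ) (B : Finset ℕ) (i : ℕ) : ℕ :=
  (B.filter (fun p => p % e = i)).card

/-- Sum of the e-weights of the beads of `B` on runner `i` (this is `|λ(i)|`). -/
def runnerWeight (e : ℕ) (B : Finset ℕ) (i : ℕ) : ℕ :=
  (B.filter (fun p => p % e = i)).sum (beadWeight e B)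

/-- The display of the e-core: slide every bead as far up its runner as possible. -/
def coreBeta (e : ℕ) (B : Finset ℕ) : Finset ℕ :=
  (Finset.range e).biUnion
    (fun i => (Finset.range (runnerCount e B i)).image (fun m => i + m * e))

/-- `lam` lies in the block with bead counts `bd 0, …, bd (e-1)` and e-weight `w`:
displayed with `r = bd 0 + ⋯ + bd (e-1)` beads it has `bd i` beads on runner `i`
and e-weight `w`. -/
def inBlock (e : ℕ) (bd : ℕ → ℕ) (w : ℕ) (lam : AbacusPartition) : Prop :=
  lam.len ≤ (Finset.range e).sum bd ∧
  (∀ i < e, runnerCount e (lam.betaSet ((Finset.range e).sum bd)) i = bd i) ∧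
  abacusWeight e (lam.betaSet ((Finset.range e).sum bd)) = w

/-- The single-runner beta-set of the partition with parts `ρ` and `c` beads. -/
def oneRunnerBeta (rho : List ℕ) (c : ℕ) : Finset ℕ :=
  (Finset.range c).image (fun t => rho.getD t 0 + (c - 1 - t))

/-- The display of the partition `⟨0_{lamOf 0}, …, (e−1)_{lamOf (e−1)} | bd 0, …, bd (e−1)⟩`. -/
def display (e : ℕ) (bd : ℕ → ℕ) (lamOf : ℕ → List ℕ) : Finset ℕ :=
  (Finset.range e).biUnion
    (fun i => (oneRunnerBeta (lamOf i) (bd i)).image (fun m => i + m * e))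

/-- The operator Ḟ at runner `res`: apply F̃^{φ} (valid when ε = 0 < φ). -/
def dotF (e : ℕ) (B : Finset ℕ) (res : ℕ) : Finset ℕ := Ftil e B res (phiB e B res)

/-- Apply a chain of Ḟ steps. -/
def chainFold (e : ℕ) : Finset ℕ → List ℕ → Finset ℕ
  | B, [] => B
  | B, i :: rest => chainFold e (dotF e B i) rest

/-- The chain of Ḟ steps is semisimple: at each step ε = 0 before, φ > 0 before,
and φ = 0 afterwards. -/
def validChain (e : ℕ) : Finset ℕ → List ℕ → Prop
  | _, [] => True
  | B, i :: rest =>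
      (epsB e B i = 0 ∧ 0 < phiB e B i ∧ phiB e (dotF e B i) i = 0) ∧
      validChain e (dotF e B i) rest

/-- `B` induces semisimply to `C` (displays with the same number of beads). -/
def InducesSS (e : ℕ) (B C : Finset ℕ) : Prop :=
  ∃ L : List ℕ, validChain e B L ∧ chainFold e B L = C

/-- Re-display a beta-set with `s` additional beads. -/
def shiftBeta (B : Finset ℕ) (s : ℕ) : Finset ℕ :=
  B.image (· + s) ∪ Finset.range s

/-- `B` induces semisimply to the partition displayed by `C` (where `C` may use a
different number of beads). -/
def InducesToPartition (e : ℕ) (B C : Finset ℕ) : Prop :=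
  ∃ D : Finset ℕ, InducesSS e B D ∧ shiftBeta D C.card = shiftBeta C D.card

/-- The block with bead counts `bd` and weight `w` is Rouquier:
for all `i < j < e`, `bd i − bd j ≥ w` or `bd j − bd i ≥ w − 1`. -/
def IsRouquier (e w : ℕ) (bd : ℕ → ℕ) : Prop :=
  ∀ i j, i < j → j < e → bd j + w ≤ bd i ∨ bd i + (w - 1) ≤ bd j

/-- `lam` is e-singular: it has `e` consecutive equal nonzero parts. -/
def ESingular (e : ℕ) (lam : AbacusPartition) : Prop :=
  ∃ i, lam.parts i ≠ 0 ∧ ∀ m < e, lam.parts (i + m) = lam.parts i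

/-- `lam` is e-regular. -/
def ERegular (e : ℕ) (lam : AbacusPartition) : Prop := ¬ ESingular e lam

/-- The induced e-sequence of the display `B`, as a multiset: each bead of
positive weight `w` at position `p` contributes `p, p−e, …, p−(w−1)e`. -/
def inducedSeq (e : ℕ) (B : Finset ℕ) : Multiset ℕ :=
  B.val.bind (fun p => (Multiset.range (beadWeight e B p)).map (fun m => p - m * e))

/-- The product order: `lam ≤_P mu` iff they have the same e-core and e-weight and
`s(mu)_r ≥ s(lam)_r` componentwise for all sufficiently large `r`. -/
def ProdLE (e : ℕ) (lam mu : AbacusPartition) : Prop :=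
  (∃ r, lam.len ≤ r ∧ mu.len ≤ r ∧
    coreBeta e (lam.betaSet r) = coreBeta e (mu.betaSet r)) ∧
  eWeight e lam = eWeight e mu ∧
  ∃ r0, ∀ r, r0 ≤ r →
    List.Forall₂ (· ≤ ·) ((inducedSeq e (lam.betaSet r)).sort (· ≤ ·))
      ((inducedSeq e (mu.betaSet r)).sort (· ≤ ·))

/-- Invariant of the signature automaton state: conormal candidates are
unoccupied positions on the runner, pending normals are occupied positions on
the runner, all conormals lie below all pending normals, both lists are
duplicate-free, and everything is `< n`. -/
def SInv (e : ℕ) (B : Finset ℕ) (res n : ℕ) (st : List ℕ × List ℕ) : Prop :=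
  (∀ q ∈ st.1, q ∉ B ∧ q % e = res ∧ q < n) ∧
  (∀ p ∈ st.2, p ∈ B ∧ p % e = res ∧ p < n) ∧
  (∀ q ∈ st.1, ∀ p ∈ st.2, q < p) ∧
  st.1.Nodup ∧ st.2.Nodup

lemma SInv_step (e : ℕ) (B : Finset ℕ) (res n p : ℕ) (st : List ℕ × List ℕ)
    (h : SInv e B res n st) (hnp : n ≤ p) (hp : p % e = res) :
    SInv e B res (p + 1) (signStep B st p) := by
  obtain ⟨h1, h2, h3, h4, h5⟩ := h
  unfold signStep
  split_ifs with hc1 hc2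
  · refine ⟨fun q hq => ⟨(h1 q hq).1, (h1 q hq).2.1, by have := (h1 q hq).2.2; omega⟩,
      ?_, ?_, h4, ?_⟩
    · intro q hq
      rcases List.mem_cons.mp hq with rfl | hq
      · exact ⟨hc1.1, hp, by omega⟩
      · exact ⟨(h2 q hq).1, (h2 q hq).2.1, by have := (h2 q hq).2.2; omega⟩
    · intro q hq p' hp'
      rcases List.mem_cons.mp hp' with rfl | hp'
      · have := (h1 q hq).2.2; omega
      · exact h3 q hq p' hp'
    · refine List.nodup_cons.mpr ⟨fun hmem => ?_, h5⟩
      have := (h2 p hmem).2.2; omega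
  · match hst : st.2 with
    | [] =>
      refine ⟨?_, by simp, by simp, ?_, by simp⟩
      · intro q hq
        rcases List.mem_cons.mp hq with rfl | hq
        · exact ⟨hc2.1, hp, by omega⟩
        · exact ⟨(h1 q hq).1, (h1 q hq).2.1, by have := (h1 q hq).2.2; omega⟩
      · refine List.nodup_cons.mpr ⟨fun hmem => ?_, h4⟩
        have := (h1 p hmem).2.2; omega
    | a :: tl =>
      rw [hst] at h2 h3 h5
      refine ⟨fun q hq => ⟨(h1 q hq).1, (h1 q hq).2.1, by have := (h1 q hq).2.2; omega⟩,
        ?_, ?_, h4, ?_⟩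
      · intro q hq
        have hq' := h2 q (List.mem_cons_of_mem a hq)
        exact ⟨hq'.1, hq'.2.1, by omega⟩
      · intro q hq p' hp'
        exact h3 q hq p' (List.mem_cons_of_mem a hp')
      · exact (List.nodup_cons.mp h5).2
  · refine ⟨fun q hq => ⟨(h1 q hq).1, (h1 q hq).2.1, by have := (h1 q hq).2.2; omega⟩,
      fun q hq => ⟨(h2 q hq).1, (h2 q hq).2.1, by have := (h2 q hq).2.2; omega⟩,
      h3, h4, h5⟩

lemma SInv_foldl (e : ℕ) (B : Finset ℕ) (res : ℕ) :
    ∀ (l : List ℕ) (st : List ℕ × List ℕ) (n : ℕ),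
    l.Pairwise (· < ·) → (∀ x ∈ l, n ≤ x ∧ x % e = res) →
    SInv e B res n st → ∃ m, SInv e B res m (l.foldl (signStep B) st) := by
  intro l
  induction l with
  | nil => intro st n _ _ h; exact ⟨n, h⟩
  | cons p rest ih =>
    intro st n hpw hx h
    have hstep := SInv_step e B res n p st h (hx p (by simp)).1 (hx p (by simp)).2
    refine ih (signStep B st p) (p + 1) (List.pairwise_cons.mp hpw).2 ?_ hstep
    intro x hxmem
    exact ⟨(List.pairwise_cons.mp hpw).1 x hxmem, (hx x (List.mem_cons_of_mem p hxmem)).2⟩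

lemma SInv_signState (e : ℕ) (B : Finset ℕ) (res : ℕ) :
    ∃ m, SInv e B res m (signState e B res) := by
  refine SInv_foldl e B res (posList e B res) ([], []) 0 ?_ ?_ ?_
  · exact List.Pairwise.filter _ List.pairwise_lt_range
  · intro x hx
    refine ⟨Nat.zero_le x, ?_⟩
    have := (List.mem_filter.mp hx).2
    simpa using this
  · exact ⟨by simp, by simp, by simp, by simp, by simp⟩

/-- Key combinatorial bound: `ε_j · φ_j ≤` the e-weight of the display. -/
lemma eps_mul_phi_le (e : ℕ) (B : Finset ℕ) (res : ℕ) :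
    epsB e B res * phiB e B res ≤ abacusWeight e B := by
  obtain ⟨m, h1, h2, h3, h4, h5⟩ := SInv_signState e B res
  set N : List ℕ := (signState e B res).2 with hN
  set C : List ℕ := (signState e B res).1 with hC
  have hNsub : N.toFinset ⊆ B := by
    intro p hp
    exact (h2 p (List.mem_toFinset.mp hp)).1
  have hbw : ∀ p ∈ N.toFinset, C.length ≤ beadWeight e B p := by
    intro p hp
    have hpN := List.mem_toFinset.mp hp
    have hsub : C.toFinset ⊆
        (Finset.range p).filter (fun q => q % e = p % e ∧ q ∉ B) := by
      intro q hq
      have hqC := List.mem_toFinset.mp hq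
      refine Finset.mem_filter.mpr ⟨Finset.mem_range.mpr (h3 q hqC p hpN), ?_, (h1 q hqC).1⟩
      rw [(h1 q hqC).2.1, (h2 p hpN).2.1]
    calc C.length = C.toFinset.card := (List.toFinset_card_of_nodup h4).symm
      _ ≤ _ := Finset.card_le_card hsub
  calc epsB e B res * phiB e B res = N.toFinset.card * C.length := by
        rw [List.toFinset_card_of_nodup h5]; rfl
    _ = N.toFinset.sum (fun _ => C.length) := by
        rw [Finset.sum_const, smul_eq_mul]
    _ ≤ N.toFinset.sum (fun p => beadWeight e B p) := Finset.sum_le_sum hbw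
    _ ≤ B.sum (fun p => beadWeight e B p) :=
        Finset.sum_le_sum_of_subset hNsub
    _ = abacusWeight e B := rfl

/-- for a partition of e-weight `w ∈ {3,4}` and `0 < k < w`:
if `φ_j(μ) − ε_j(μ) = k` then `ε_j(μ) ≤ 1`, and if `ε_j(μ) − φ_j(μ) = k` then
`φ_j(μ) ≤ 1`. -/
theorem stmt3 (e : ℕ) (he : 2 ≤ e) (w : ℕ) (hw34 : w = 3 ∨ w = 4)
    (mu : AbacusPartition) (hw : eWeight e mu = w) (j : ℕ) (hj : j < e)
    (k : ℕ) (hk0 : 0 < k) (hkw : k < w) :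
    (phiP e mu j = epsP e mu j + k → epsP e mu j ≤ 1) ∧
    (epsP e mu j = phiP e mu j + k → phiP e mu j ≤ 1) := by
  have hle := eps_mul_phi_le e (mu.betaSet mu.len) ((j + mu.len) % e)
  have hwk : abacusWeight e (mu.betaSet mu.len) = w := hw
  rw [hwk] at hle
  have hw4 : w ≤ 4 := by rcases hw34 with rfl | rfl <;> omega
  constructor
  · intro heq
    by_contra hlt
    push_neg at hlt
    have h2 : 2 ≤ epsP e mu j := hlt
    have : epsP e mu j * phiP e mu j ≤ w := hle
    rw [heq] at this
    nlinarith
  · intro heq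
    by_contra hlt
    push_neg at hlt
    have h2 : 2 ≤ phiP e mu j := hlt
    have : epsP e mu j * phiP e mu j ≤ w := hle
    rw [heq] at this
    nlinarith
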